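/- Quantum agents cannot disagree singularly: no quantum box, with arbitrary finite input sets X, Y containing {0,1} and finite output sets A, B containing {0,1}, can exhibit singular disagreement. -/

import Mathlib

open Finset
open scoped ComplexOrder

attribute [local instance] Classical.propDecidable

noncomputable section

/-- A bipartite box `P a b x y = P(a,b|x,y)`: nonnegative entries summing to one over
the outputs, for every pair of inputs. -/
def IsBox {nA nB nX nY : ℕ} (P : Fin nA → Fin nB → Fin nX → Fin nY → ℝ) : Prop :=
  (∀ a b x y, 0 ≤ P a b x y) ∧ ∀ x y, ∑ a, ∑ b, P a b x y = 1

/-- A bipartite box is nonsignalling if Alice's output marginal does not depend on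
Bob's input and vice versa. -/
def NonSignallingBox {nA nB nX nY : ℕ}
    (P : Fin nA → Fin nB → Fin nX → Fin nY → ℝ) : Prop :=
  (∀ a x y y', ∑ b, P a b x y = ∑ b, P a b x y') ∧
  (∀ b y x x', ∑ a, P a b x y = ∑ a, P a b x' y)

/-- A quantum box: realised by local POVMs on a shared bipartite quantum state. -/
def IsQuantumBox {nA nB nX nY : ℕ}
    (P : Fin nA → Fin nB → Fin nX → Fin nY → ℝ) : Prop :=
  ∃ (dA dB : ℕ) (ρ : Matrix (Fin dA × Fin dB) (Fin dA × Fin dB) ℂ)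
    (E : Fin nX → Fin nA → Matrix (Fin dA) (Fin dA) ℂ)
    (F : Fin nY → Fin nB → Matrix (Fin dB) (Fin dB) ℂ),
    ρ.PosSemidef ∧ ρ.trace = 1 ∧
    (∀ x a, (E x a).PosSemidef) ∧ (∀ x, ∑ a, E x a = 1) ∧
    (∀ y b, (F y b).PosSemidef) ∧ (∀ y, ∑ b, F y b = 1) ∧
    ∀ a b x y, (P a b x y : ℂ) =
      ∑ q : Fin dA × Fin dB, ∑ q' : Fin dA × Fin dB,
        E x a q.1 q'.1 * F y b q.2 q'.2 * ρ q' q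

/-- The pair of output sets `(αₙ, βₙ)` of the agreement argument for boxes:
`α₀` is the set of Alice's outputs (on input `x0`) for which she assigns conditional
probability `qA` to Bob outputting `b1` on input `y1` (similarly `β₀` for Bob), and
`α_{n+1}` (resp. `β_{n+1}`) is the subset of `αₙ` (resp. `βₙ`) at which Alice (resp.
Bob) is moreover certain, on inputs `(x0, y0)`, that Bob's (resp. Alice's) output lies
in `βₙ` (resp. `αₙ`). -/
def ccdSets {nA nB nX nY : ℕ} (P : Fin nA → Fin nB → Fin nX → Fin nY → ℝ)
    (x0 x1 : Fin nX) (y0 y1 : Fin nY) (a1 : Fin nA) (b1 : Fin nB) (qA qB : ℝ) :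
    ℕ → Finset (Fin nA) × Finset (Fin nB)
  | 0 => (univ.filter fun a => P a b1 x0 y1 / (∑ b, P a b x0 y1) = qA,
          univ.filter fun b => P a1 b x1 y0 / (∑ a, P a b x1 y0) = qB)
  | n + 1 =>
      let s := ccdSets P x0 x1 y0 y1 a1 b1 qA qB n
      (s.1.filter fun a => (∑ b ∈ s.2, P a b x0 y0) / (∑ b, P a b x0 y0) = 1,
       s.2.filter fun b => (∑ a ∈ s.1, P a b x0 y0) / (∑ a, P a b x0 y0) = 1)

/-- A box exhibits **common certainty of disagreement** (at inputs/outputs `(0,0,0,0)`,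
about the outputs of interest `(1,1)` on inputs `(1,1)`) if: the outputs on inputs
`(1,1)` are perfectly correlated, the event `(0,0,0,0)` has positive probability, and
there are `q_A ≠ q_B` in `[0,1]` with `0 ∈ αₙ` and `0 ∈ βₙ` for every `n`. -/
def HasCCD {nA nB nX nY : ℕ} (hA : 2 ≤ nA) (hB : 2 ≤ nB) (hX : 2 ≤ nX) (hY : 2 ≤ nY)
    (P : Fin nA → Fin nB → Fin nX → Fin nY → ℝ) : Prop :=
  let a0 : Fin nA := ⟨0, by omega⟩
  let a1 : Fin nA := ⟨1, hA⟩
  let b0 : Fin nB := ⟨0, by omega⟩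
  let b1 : Fin nB := ⟨1, hB⟩
  let x0 : Fin nX := ⟨0, by omega⟩
  let x1 : Fin nX := ⟨1, hX⟩
  let y0 : Fin nY := ⟨0, by omega⟩
  let y1 : Fin nY := ⟨1, hY⟩
  (∀ (a : Fin nA) (b : Fin nB), (a : ℕ) ≠ (b : ℕ) → P a b x1 y1 = 0) ∧
  0 < P a0 b0 x0 y0 ∧
  ∃ qA qB : ℝ, qA ∈ Set.Icc (0 : ℝ) 1 ∧ qB ∈ Set.Icc (0 : ℝ) 1 ∧ qA ≠ qB ∧
    ∀ n : ℕ, a0 ∈ (ccdSets P x0 x1 y0 y1 a1 b1 qA qB n).1 ∧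
             b0 ∈ (ccdSets P x0 x1 y0 y1 a1 b1 qA qB n).2

/-- A box exhibits **singular disagreement** if: the outputs on inputs `(1,1)` are
perfectly correlated, the event `(0,0,0,0)` has positive probability, and the
well-defined conditional probabilities satisfy `P(b=1|a=0,x=0,y=1) = 1` and
`P(a=1|b=0,x=1,y=0) = 0`. -/
def HasSD {nA nB nX nY : ℕ} (hA : 2 ≤ nA) (hB : 2 ≤ nB) (hX : 2 ≤ nX) (hY : 2 ≤ nY)
    (P : Fin nA → Fin nB → Fin nX → Fin nY → ℝ) : Prop :=
  let a0 : Fin nA := ⟨0, by omega⟩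
  let a1 : Fin nA := ⟨1, hA⟩
  let b0 : Fin nB := ⟨0, by omega⟩
  let b1 : Fin nB := ⟨1, hB⟩
  let x0 : Fin nX := ⟨0, by omega⟩
  let x1 : Fin nX := ⟨1, hX⟩
  let y0 : Fin nY := ⟨0, by omega⟩
  let y1 : Fin nY := ⟨1, hY⟩
  (∀ (a : Fin nA) (b : Fin nB), (a : ℕ) ≠ (b : ℕ) → P a b x1 y1 = 0) ∧
  0 < P a0 b0 x0 y0 ∧
  (0 < ∑ b, P a0 b x0 y1 ∧ P a0 b1 x0 y1 / (∑ b, P a0 b x0 y1) = 1) ∧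
  (0 < ∑ a, P a b0 x1 y0 ∧ P a1 b0 x1 y0 / (∑ a, P a b0 x1 y0) = 0)

section SqrtAux

open scoped MatrixOrder

theorem Matrix.PosSemidef.exists_sqrt_aux {p : Type*} [Fintype p] {A : Matrix p p ℂ}
    (hA : A.PosSemidef) : ∃ R : Matrix p p ℂ, R.PosSemidef ∧ R * R = A := by
  classical
  exact ⟨CFC.sqrt A, Matrix.nonneg_iff_posSemidef.mp (CFC.sqrt_nonneg A), CFC.sqrt_mul_sqrt_self A hA.nonneg⟩

def Matrix.PosSemidef.sqrt {p : Type*} [Fintype p] {A : Matrix p p ℂ}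
    (hA : A.PosSemidef) : Matrix p p ℂ :=
  Classical.choose hA.exists_sqrt_aux

theorem Matrix.PosSemidef.posSemidef_sqrt {p : Type*} [Fintype p] {A : Matrix p p ℂ}
    (hA : A.PosSemidef) : hA.sqrt.PosSemidef :=
  (Classical.choose_spec hA.exists_sqrt_aux).1

theorem Matrix.PosSemidef.sqrt_mul_self {p : Type*} [Fintype p] {A : Matrix p p ℂ}
    (hA : A.PosSemidef) : hA.sqrt * hA.sqrt = A :=
  (Classical.choose_spec hA.exists_sqrt_aux).2

end SqrtAux

section Aux

open Matrix
open scoped Kronecker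

variable {m n : Type*} [Fintype m] [Fintype n] [DecidableEq m] [DecidableEq n]

omit [Fintype m] [Fintype n] [DecidableEq m] [DecidableEq n] in
lemma kron_conjT (A : Matrix m m ℂ) (B : Matrix n n ℂ) : (A ⊗ₖ B)ᴴ = Aᴴ ⊗ₖ Bᴴ := by
  ext ⟨i, j⟩ ⟨k, l⟩
  simp [Matrix.conjTranspose_apply, Matrix.kroneckerMap_apply, mul_comm]

lemma kron_psd {A : Matrix m m ℂ} {B : Matrix n n ℂ}
    (hA : A.PosSemidef) (hB : B.PosSemidef) : (A ⊗ₖ B).PosSemidef := by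
  have h : A ⊗ₖ B = (hA.sqrt ⊗ₖ hB.sqrt)ᴴ * (hA.sqrt ⊗ₖ hB.sqrt) := by
    rw [kron_conjT, hA.posSemidef_sqrt.1, hB.posSemidef_sqrt.1,
      ← Matrix.mul_kronecker_mul, hA.sqrt_mul_self, hB.sqrt_mul_self]
  rw [h]
  exact Matrix.posSemidef_conjTranspose_mul_self _

omit [DecidableEq m] [DecidableEq n] in
lemma trace_conjT_mul_self_eq_zero {M : Matrix m n ℂ} (h : (Mᴴ * M).trace = 0) : M = 0 := by
  have h2 : ∑ j, ∑ i, Complex.normSq (M i j) = 0 := by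
    have h1 : ((Mᴴ * M).trace) = ((∑ j, ∑ i, Complex.normSq (M i j) : ℝ) : ℂ) := by
      push_cast
      simp only [Matrix.trace, Matrix.diag, Matrix.mul_apply, Matrix.conjTranspose_apply]
      refine Finset.sum_congr rfl fun j _ => Finset.sum_congr rfl fun i _ => ?_
      rw [Complex.normSq_eq_conj_mul_self]; rfl
    rw [h1] at h
    exact_mod_cast h
  ext i j
  have := (Finset.sum_eq_zero_iff_of_nonneg (fun j _ => Finset.sum_nonneg
    (fun i _ => Complex.normSq_nonneg _))).mp h2 j (Finset.mem_univ j)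
  have := (Finset.sum_eq_zero_iff_of_nonneg (fun i _ => Complex.normSq_nonneg _)).mp this i
    (Finset.mem_univ i)
  simpa using Complex.normSq_eq_zero.mp this

omit [DecidableEq m] in
lemma psd_mul_eq_zero {S ρ : Matrix m m ℂ} (hS : S.PosSemidef) (hρ : ρ.PosSemidef)
    (h : (S * ρ).trace = 0) : S * ρ = 0 := by
  set M := hS.sqrt * hρ.sqrt with hM
  have e : Mᴴ * M = hρ.sqrt * (S * hρ.sqrt) := by
    rw [hM, conjTranspose_mul, hS.posSemidef_sqrt.1, hρ.posSemidef_sqrt.1]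
    calc hρ.sqrt * hS.sqrt * (hS.sqrt * hρ.sqrt)
        = hρ.sqrt * ((hS.sqrt * hS.sqrt) * hρ.sqrt) := by noncomm_ring
      _ = hρ.sqrt * (S * hρ.sqrt) := by rw [hS.sqrt_mul_self]
  have ht : (Mᴴ * M).trace = 0 := by
    rw [e, Matrix.trace_mul_comm, Matrix.mul_assoc, hρ.sqrt_mul_self, h]
  have hM0 : M = 0 := trace_conjT_mul_self_eq_zero ht
  have h1 : hS.sqrt * hS.sqrt = S := hS.sqrt_mul_self
  have h2 : hρ.sqrt * hρ.sqrt = ρ := hρ.sqrt_mul_self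
  calc S * ρ = (hS.sqrt * hS.sqrt) * (hρ.sqrt * hρ.sqrt) := by rw [h1, h2]
    _ = hS.sqrt * M * hρ.sqrt := by rw [hM]; noncomm_ring
    _ = 0 := by rw [hM0, Matrix.mul_zero, Matrix.zero_mul]

omit [Fintype m] [Fintype n] [DecidableEq m] [DecidableEq n] in
lemma kron_sum_right {ι : Type*} (s : Finset ι) (A : Matrix m m ℂ) (f : ι → Matrix n n ℂ) :
    A ⊗ₖ (∑ b ∈ s, f b) = ∑ b ∈ s, A ⊗ₖ f b := by
  ext ⟨i, j⟩ ⟨k, l⟩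
  simp [Matrix.kroneckerMap_apply, Finset.mul_sum, Matrix.sum_apply]

omit [Fintype m] [Fintype n] [DecidableEq m] [DecidableEq n] in
lemma kron_sum_left {ι : Type*} (s : Finset ι) (f : ι → Matrix m m ℂ) (B : Matrix n n ℂ) :
    (∑ a ∈ s, f a) ⊗ₖ B = ∑ a ∈ s, f a ⊗ₖ B := by
  ext ⟨i, j⟩ ⟨k, l⟩
  simp [Matrix.kroneckerMap_apply, Finset.sum_mul, Matrix.sum_apply]

omit [Fintype m] [Fintype n] [DecidableEq m] [DecidableEq n] in
lemma kron_sub_right (A : Matrix m m ℂ) (B C : Matrix n n ℂ) :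
    A ⊗ₖ (B - C) = A ⊗ₖ B - A ⊗ₖ C := by
  ext ⟨i, j⟩ ⟨k, l⟩; simp [Matrix.kroneckerMap_apply, mul_sub]

omit [Fintype m] [Fintype n] [DecidableEq m] [DecidableEq n] in
lemma kron_sub_left (A B : Matrix m m ℂ) (C : Matrix n n ℂ) :
    (A - B) ⊗ₖ C = A ⊗ₖ C - B ⊗ₖ C := by
  ext ⟨i, j⟩ ⟨k, l⟩; simp [Matrix.kroneckerMap_apply, sub_mul]

omit [DecidableEq m] in
lemma psd_sum {ι : Type*} (s : Finset ι) (f : ι → Matrix m m ℂ)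
    (h : ∀ i ∈ s, (f i).PosSemidef) : (∑ i ∈ s, f i).PosSemidef := by
  classical
  induction s using Finset.induction with
  | empty => simpa using Matrix.PosSemidef.zero
  | @insert x s hx ih =>
    rw [Finset.sum_insert hx]
    exact (h _ (Finset.mem_insert_self _ _)).add
      (ih fun i hi => h i (Finset.mem_insert_of_mem hi))

end Aux

open Matrix
open scoped Kronecker

/-- **Quantum agents cannot disagree singularly.** No quantum box, with arbitrary finite
input and output sets containing `{0,1}`, can exhibit singular disagreement. -/
theorem quantum_no_singular_disagreement
    {nA nB nX nY : ℕ} (hA : 2 ≤ nA) (hB : 2 ≤ nB) (hX : 2 ≤ nX) (hY : 2 ≤ nY)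
    (P : Fin nA → Fin nB → Fin nX → Fin nY → ℝ)
    (hq : IsQuantumBox P) :
    ¬ HasSD hA hB hX hY P := by
  intro hsd
  obtain ⟨dA, dB, ρ, E, F, hρ, hρtr, hE, hEsum, hF, hFsum, hP⟩ := hq
  obtain ⟨hcorr, hpos, ⟨hd1, hr1⟩, ⟨hd2, hr2⟩⟩ := hsd
  set a0 : Fin nA := ⟨0, by omega⟩ with ha0
  set a1 : Fin nA := ⟨1, hA⟩ with ha1
  set b0 : Fin nB := ⟨0, by omega⟩ with hb0
  set b1 : Fin nB := ⟨1, hB⟩ with hb1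
  set x0 : Fin nX := ⟨0, by omega⟩ with hx0
  set x1 : Fin nX := ⟨1, hX⟩ with hx1
  set y0 : Fin nY := ⟨0, by omega⟩ with hy0
  set y1 : Fin nY := ⟨1, hY⟩ with hy1
  -- trace formula
  have key : ∀ a b x y, (P a b x y : ℂ) = ((E x a ⊗ₖ F y b) * ρ).trace := by
    intro a b x y
    rw [hP]
    simp only [Matrix.trace, Matrix.diag, Matrix.mul_apply, Matrix.kroneckerMap_apply]
  set E0 := E x0 a0
  set E1 := E x1 a1
  set F0 := F y0 b0
  set F1 := F y1 b1
  -- marginal trace formulas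
  have tsum_b : ∀ (x : Fin nX) (a : Fin nA) (y : Fin nY),
      ((E x a ⊗ₖ (1 : Matrix (Fin dB) (Fin dB) ℂ)) * ρ).trace
        = ((∑ b, P a b x y : ℝ) : ℂ) := by
    intro x a y
    rw [← hFsum y, kron_sum_right, Finset.sum_mul, Matrix.trace_sum]
    push_cast
    exact Finset.sum_congr rfl fun b _ => (key a b x y).symm
  have tsum_a : ∀ (y : Fin nY) (b : Fin nB) (x : Fin nX),
      (((1 : Matrix (Fin dA) (Fin dA) ℂ) ⊗ₖ F y b) * ρ).trace
        = ((∑ a, P a b x y : ℝ) : ℂ) := by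
    intro y b x
    rw [← hEsum x, kron_sum_left, Finset.sum_mul, Matrix.trace_sum]
    push_cast
    exact Finset.sum_congr rfl fun a _ => (key a b x y).symm
  -- PSD of complements
  have hOneSubF1 : ((1 : Matrix (Fin dB) (Fin dB) ℂ) - F1).PosSemidef := by
    have h1 : (∑ b, F y1 b) = F y1 b1 + ∑ b ∈ univ.erase b1, F y1 b :=
      (Finset.add_sum_erase _ _ (Finset.mem_univ b1)).symm
    have h2 : (1 : Matrix (Fin dB) (Fin dB) ℂ) - F1 = ∑ b ∈ univ.erase b1, F y1 b := by
      rw [← hFsum y1, h1]; exact add_sub_cancel_left _ _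
    rw [h2]; exact psd_sum _ _ fun b _ => hF y1 b
  have hOneSubE1 : ((1 : Matrix (Fin dA) (Fin dA) ℂ) - E1).PosSemidef := by
    have h1 : (∑ a, E x1 a) = E x1 a1 + ∑ a ∈ univ.erase a1, E x1 a :=
      (Finset.add_sum_erase _ _ (Finset.mem_univ a1)).symm
    have h2 : (1 : Matrix (Fin dA) (Fin dA) ℂ) - E1 = ∑ a ∈ univ.erase a1, E x1 a := by
      rw [← hEsum x1, h1]; exact add_sub_cancel_left _ _
    rw [h2]; exact psd_sum _ _ fun a _ => hE x1 a
  -- trace facts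
  have fA : ((E0 ⊗ₖ ((1 : Matrix (Fin dB) (Fin dB) ℂ) - F1)) * ρ).trace = 0 := by
    rw [kron_sub_right, Matrix.sub_mul, Matrix.trace_sub, tsum_b x0 a0 y1, ← key]
    have h : P a0 b1 x0 y1 = ∑ b, P a0 b x0 y1 := (div_eq_one_iff_eq (ne_of_gt hd1)).mp hr1
    rw [h, sub_self]
  have fB : ((((1 : Matrix (Fin dA) (Fin dA) ℂ) - E1) ⊗ₖ F1) * ρ).trace = 0 := by
    rw [kron_sub_left, Matrix.sub_mul, Matrix.trace_sub, tsum_a y1 b1 x1, ← key]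
    have h : ∑ a, P a b1 x1 y1 = P a1 b1 x1 y1 := by
      rw [← Finset.add_sum_erase _ _ (Finset.mem_univ a1)]
      have hz : ∑ a ∈ univ.erase a1, P a b1 x1 y1 = 0 :=
        Finset.sum_eq_zero fun a ha => hcorr a b1 (by
          intro hcontra
          exact Finset.ne_of_mem_erase ha (Fin.ext (by simpa using hcontra)))
      rw [hz, add_zero]
    rw [h, sub_self]
  have fC : ((E1 ⊗ₖ ((1 : Matrix (Fin dB) (Fin dB) ℂ) - F1)) * ρ).trace = 0 := by
    rw [kron_sub_right, Matrix.sub_mul, Matrix.trace_sub, tsum_b x1 a1 y1, ← key]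
    have h : ∑ b, P a1 b x1 y1 = P a1 b1 x1 y1 := by
      rw [← Finset.add_sum_erase _ _ (Finset.mem_univ b1)]
      have hz : ∑ b ∈ univ.erase b1, P a1 b x1 y1 = 0 :=
        Finset.sum_eq_zero fun b hb => hcorr a1 b (by
          intro hcontra
          exact Finset.ne_of_mem_erase hb (Fin.ext (by simpa using hcontra.symm)))
      rw [hz, add_zero]
    rw [h, sub_self]
  have fD : ((E1 ⊗ₖ F0) * ρ).trace = 0 := by
    have h : P a1 b0 x1 y0 = 0 := by
      rcases div_eq_zero_iff.mp hr2 with h | h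
      · exact h
      · exact absurd h (ne_of_gt hd2)
    rw [← key, h, Complex.ofReal_zero]
  -- matrix facts
  have mA' : (E0 ⊗ₖ (1 : Matrix (Fin dB) (Fin dB) ℂ)) * ρ = (E0 ⊗ₖ F1) * ρ := by
    have := psd_mul_eq_zero (kron_psd (hE x0 a0) hOneSubF1) hρ fA
    rw [kron_sub_right, Matrix.sub_mul] at this
    exact sub_eq_zero.mp this
  have mB' : ((1 : Matrix (Fin dA) (Fin dA) ℂ) ⊗ₖ F1) * ρ = (E1 ⊗ₖ F1) * ρ := by
    have := psd_mul_eq_zero (kron_psd hOneSubE1 (hF y1 b1)) hρ fB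
    rw [kron_sub_left, Matrix.sub_mul] at this
    exact sub_eq_zero.mp this
  have mC' : (E1 ⊗ₖ F1) * ρ = (E1 ⊗ₖ (1 : Matrix (Fin dB) (Fin dB) ℂ)) * ρ := by
    have := psd_mul_eq_zero (kron_psd (hE x1 a1) hOneSubF1) hρ fC
    rw [kron_sub_right, Matrix.sub_mul] at this
    exact (sub_eq_zero.mp this).symm
  have mD : (E1 ⊗ₖ F0) * ρ = 0 :=
    psd_mul_eq_zero (kron_psd (hE x1 a1) (hF y0 b0)) hρ fD
  -- the chain
  have chain : (E0 ⊗ₖ (1 : Matrix (Fin dB) (Fin dB) ℂ)) * ρ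
      = ((E0 * E1) ⊗ₖ (1 : Matrix (Fin dB) (Fin dB) ℂ)) * ρ := by
    calc (E0 ⊗ₖ (1 : Matrix (Fin dB) (Fin dB) ℂ)) * ρ = (E0 ⊗ₖ F1) * ρ := mA'
      _ = (E0 ⊗ₖ (1 : Matrix (Fin dB) (Fin dB) ℂ))
            * (((1 : Matrix (Fin dA) (Fin dA) ℂ) ⊗ₖ F1) * ρ) := by
          rw [← Matrix.mul_assoc, ← Matrix.mul_kronecker_mul, Matrix.mul_one, Matrix.one_mul]
      _ = (E0 ⊗ₖ (1 : Matrix (Fin dB) (Fin dB) ℂ)) * ((E1 ⊗ₖ F1) * ρ) := by rw [mB']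
      _ = (E0 ⊗ₖ (1 : Matrix (Fin dB) (Fin dB) ℂ))
            * ((E1 ⊗ₖ (1 : Matrix (Fin dB) (Fin dB) ℂ)) * ρ) := by rw [mC']
      _ = ((E0 * E1) ⊗ₖ (1 : Matrix (Fin dB) (Fin dB) ℂ)) * ρ := by
          rw [← Matrix.mul_assoc, ← Matrix.mul_kronecker_mul, Matrix.mul_one]
  -- conclusion
  have final : ((E0 ⊗ₖ F0) * ρ).trace = 0 := by
    have e1 : E0 ⊗ₖ F0
        = ((1 : Matrix (Fin dA) (Fin dA) ℂ) ⊗ₖ F0) * (E0 ⊗ₖ (1 : Matrix (Fin dB) (Fin dB) ℂ)) := by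
      rw [← Matrix.mul_kronecker_mul, Matrix.one_mul, Matrix.mul_one]
    have e2 : ((1 : Matrix (Fin dA) (Fin dA) ℂ) ⊗ₖ F0)
          * ((E0 * E1) ⊗ₖ (1 : Matrix (Fin dB) (Fin dB) ℂ))
        = (E0 ⊗ₖ (1 : Matrix (Fin dB) (Fin dB) ℂ)) * (E1 ⊗ₖ F0) := by
      rw [← Matrix.mul_kronecker_mul, ← Matrix.mul_kronecker_mul, Matrix.one_mul,
        Matrix.mul_one, Matrix.one_mul]
    rw [e1, Matrix.mul_assoc, chain, ← Matrix.mul_assoc, e2, Matrix.mul_assoc, mD,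
      Matrix.mul_zero, Matrix.trace_zero]
  have hzero : (P a0 b0 x0 y0 : ℂ) = 0 := by rw [key, final]
  exact absurd (Complex.ofReal_eq_zero.mp hzero) (ne_of_gt hpos)
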